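/- The recurrence b_n = p_n·b_{n-1} - q_n·p_n for n ≥ 2, with p_k = 1/((k-1)k) and q_k = (2k-1)/((k-1)!·k!), has solution b_n = (b_1 - 2ξ̃_n)/(n!·(n-1)!), where ξ̃_n = (1/2)·Σ_{k=2}^n (1/k + 1/(k-1)). -/

import Mathlib

/-- The recurrence `b_n = p_n b_{n-1} - q_n p_n` (`n ≥ 2`), with `p_k = 1/((k-1)k)` and
`q_k = (2k-1)/((k-1)!·k!)`, has solution `b_n = (b₁ - 2ξ̃_n)/(n!·(n-1)!)`, where
`ξ̃_n = (1/2)·∑_{k=2}^n (1/k + 1/(k-1))`. -/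
theorem recurrence_solution (b : ℕ → ℝ) (p q : ℕ → ℝ)
    (hp : ∀ k : ℕ, 2 ≤ k → p k = 1 / (((k : ℝ) - 1) * k))
    (hq : ∀ k : ℕ, 2 ≤ k →
      q k = (2 * (k : ℝ) - 1) / ((Nat.factorial (k - 1) : ℝ) * (Nat.factorial k)))
    (hrec : ∀ n : ℕ, 2 ≤ n → b n = p n * b (n - 1) - q n * p n) :
    ∀ n : ℕ, 2 ≤ n →
      b n = (b 1 - 2 * ((1 / 2) * ∑ k ∈ Finset.Icc 2 n, ((1 : ℝ) / k + 1 / ((k : ℝ) - 1))))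
        / ((Nat.factorial n : ℝ) * (Nat.factorial (n - 1))) := by
  intro n hn
  induction n, hn using Nat.le_induction with
  | base =>
      rw [hrec 2 le_rfl, hp 2 le_rfl, hq 2 le_rfl]
      norm_num [Nat.factorial]
      ring
  | succ n hn ih =>
      have hn1 : (1:ℝ) ≤ (n:ℝ) := by exact_mod_cast hn.trans' (by norm_num)
      have hne : (n:ℝ) ≠ 0 := by positivity
      have hne1 : (n:ℝ) + 1 ≠ 0 := by positivity
      have hfn : (Nat.factorial n : ℝ) ≠ 0 := by
        exact_mod_cast Nat.factorial_ne_zero n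
      have hfn1 : (Nat.factorial (n-1) : ℝ) ≠ 0 := by
        exact_mod_cast Nat.factorial_ne_zero (n-1)
      have hs : n = (n - 1) + 1 := (Nat.succ_pred_eq_of_pos (by omega)).symm
      have hfact : (Nat.factorial n : ℝ) = n * Nat.factorial (n - 1) := by
        rw [hs]; push_cast [Nat.factorial_succ]; ring
      rw [hrec (n+1) (by omega), hp (n+1) (by omega), hq (n+1) (by omega)]
      simp only [Nat.add_sub_cancel]
      rw [ih, Finset.sum_Icc_succ_top (by omega : 2 ≤ n + 1)]
      push_cast
      rw [Nat.factorial_succ]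
      push_cast
      field_simp
      ring_nf
      rw [hfact]
      field_simp
      ring
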